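/- Let q be an odd prime, a ≥ 1, and n ≥ 1 with (q-1) ∤ n and q^(a-1) | n. Then the sequence (S_n(m) mod q^a)_{m≥1} is periodic with exact period q: S_n(m + q) ≡ S_n(m) (mod q^a) for all m ≥ 1, and S_n(q) ≢ S_n(1) (mod q^a). -/

import Mathlib

def S (n m : ℕ) : ℕ := ∑ i ∈ Finset.Icc 1 m, i ^ n

theorem stmt15 (q a n : ℕ) (hq : q.Prime) (hodd : Odd q) (ha : 1 ≤ a) (hn : 1 ≤ n)
    (hnd : ¬ (q - 1 ∣ n)) (hdvd : q ^ (a - 1) ∣ n) :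
    (∀ m, 1 ≤ m → S n (m + q) ≡ S n m [MOD q ^ a]) ∧
    ¬ S n q ≡ S n 1 [MOD q ^ a] := by
  haveI : Fact q.Prime := ⟨hq⟩
  haveI : NeZero q := ⟨hq.pos.ne'⟩
  obtain ⟨k, hk⟩ := hdvd
  -- Lemma A : congruence mod q lifts to congruence of n-th powers mod q^a
  have hA : ∀ x y : ℕ, x ≡ y [MOD q] → x ^ n ≡ y ^ n [MOD q ^ a] := by
    intro x y h
    have h1 : (q : ℤ) ∣ (y : ℤ) - x := (Nat.modEq_iff_dvd).mp h
    have h2 := dvd_sub_pow_of_dvd_sub h1 (a - 1)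
    rw [Nat.sub_add_cancel ha] at h2
    have h3 : x ^ q ^ (a - 1) ≡ y ^ q ^ (a - 1) [MOD q ^ a] := by
      rw [Nat.modEq_iff_dvd]
      push_cast
      exact h2
    calc x ^ n = (x ^ q ^ (a - 1)) ^ k := by rw [← pow_mul, ← hk]
      _ ≡ (y ^ q ^ (a - 1)) ^ k [MOD q ^ a] := h3.pow k
      _ = y ^ n := by rw [← pow_mul, ← hk]
  set R := ZMod (q ^ a) with hR
  set F : ZMod q → R := fun x => ((x.val : ℕ) : R) ^ n with hF
  have hcast : ∀ i : ℕ, ((i ^ n : ℕ) : R) = F ((i : ZMod q)) := by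
    intro i
    have h1 : (i : ZMod q).val ≡ i [MOD q] := by
      rw [ZMod.val_natCast]; exact Nat.mod_modEq i q
    have h2 := (ZMod.natCast_eq_natCast_iff _ _ _).mpr (hA _ _ h1)
    simp only [hF]
    push_cast at h2 ⊢
    exact h2.symm
  have hmul : ∀ x y : ZMod q, F (x * y) = F x * F y := by
    intro x y
    have h1 : (x * y).val ≡ x.val * y.val [MOD q] := by
      rw [ZMod.val_mul]; exact Nat.mod_modEq _ q
    have h2 := (ZMod.natCast_eq_natCast_iff _ _ _).mpr (hA _ _ h1)
    simp only [hF]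
    push_cast at h2 ⊢
    rw [h2, mul_pow]
  -- a generator of the units
  obtain ⟨g, hg⟩ := IsCyclic.exists_generator (α := (ZMod q)ˣ)
  have hgn : ((g : ZMod q)) ^ n ≠ 1 := by
    intro h
    have hu : g ^ n = 1 := Units.ext (by rw [Units.val_pow_eq_pow_val, h, Units.val_one])
    have hdvd' : orderOf g ∣ n := orderOf_dvd_of_pow_eq_one hu
    rw [orderOf_eq_card_of_forall_mem_zpowers hg, Nat.card_eq_fintype_card,
      ZMod.card_units_eq_totient, Nat.totient_prime hq] at hdvd'
    exact hnd hdvd'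
  have hgval : (((g : ZMod q).val : ℕ) : ZMod q) = (g : ZMod q) := by
    rw [ZMod.natCast_val, ZMod.cast_id]
  set c : ℕ := (g : ZMod q).val with hc
  have hc0 : c ≠ 0 := by
    intro h
    exact g.ne_zero ((ZMod.val_eq_zero _).mp h)
  have hc1 : 1 ≤ c ^ n := Nat.one_le_iff_ne_zero.mpr (pow_ne_zero _ hc0)
  -- F g - 1 is a unit in R
  have hunit : IsUnit ((F (g : ZMod q)) - 1) := by
    have heq : (F (g : ZMod q)) - 1 = ((c ^ n - 1 : ℕ) : R) := by
      simp only [hF, ← hc]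
      push_cast [Nat.cast_sub hc1]
      ring
    rw [heq]
    refine (ZMod.isUnit_iff_coprime (c ^ n - 1) (q ^ a)).mpr ?_
    apply Nat.Coprime.pow_right
    have hnd2 : ¬ q ∣ c ^ n - 1 := by
      intro hdq
      apply hgn
      have h3 : 1 ≡ c ^ n [MOD q] := (Nat.modEq_iff_dvd' hc1).mpr hdq
      have h4 := (ZMod.natCast_eq_natCast_iff _ _ _).mpr h3.symm
      push_cast at h4
      rwa [hgval] at h4
    exact ((Nat.Prime.coprime_iff_not_dvd hq).mpr hnd2).symm
  -- sum of F over all of ZMod q vanishes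
  have hSsum : ∑ x : ZMod q, F x = 0 := by
    have hperm : ∑ x : ZMod q, F ((g : ZMod q) * x) = ∑ x : ZMod q, F x :=
      Equiv.sum_comp (Equiv.mulLeft₀ (g : ZMod q) g.ne_zero) F
    have h2 : F (g : ZMod q) * ∑ x : ZMod q, F x = ∑ x : ZMod q, F x := by
      rw [Finset.mul_sum, ← hperm]
      exact Finset.sum_congr rfl fun x _ => (hmul _ x).symm
    have h3 : (F (g : ZMod q) - 1) * ∑ x : ZMod q, F x = 0 := by
      rw [sub_mul, h2, one_mul, sub_self]
    exact (hunit.mul_right_eq_zero).mp h3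
  -- sum over range q equals sum over ZMod q
  have hrange : ∀ G : ZMod q → R,
      ∑ i ∈ Finset.range q, G (i : ZMod q) = ∑ x : ZMod q, G x := by
    intro G
    refine Finset.sum_nbij' (fun i => (i : ZMod q)) (fun x => x.val) ?_ ?_ ?_ ?_ ?_
    · intro i _; exact Finset.mem_univ _
    · intro x _; exact Finset.mem_range.mpr (ZMod.val_lt x)
    · intro i hi; exact ZMod.val_natCast_of_lt (Finset.mem_range.mp hi)
    · intro x _; show ((x.val : ℕ) : ZMod q) = x; rw [ZMod.natCast_val, ZMod.cast_id]
    · intro i _; rfl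
  have hF0 : F 0 = 0 := by
    simp only [hF, ZMod.val_zero, Nat.cast_zero]
    exact zero_pow (by omega)
  -- q^a divides S n (q-1)
  have hT : ((S n (q - 1) : ℕ) : R) = 0 := by
    have h0 : ∑ i ∈ Finset.range q, F (i : ZMod q) = 0 := by rw [hrange F]; exact hSsum
    rw [Finset.range_eq_Ico, Finset.sum_eq_sum_Ico_succ_bot hq.pos] at h0
    have hz : F ((0 : ℕ) : ZMod q) = 0 := by rw [Nat.cast_zero]; exact hF0
    rw [hz, zero_add] at h0
    have hIcc : Finset.Icc 1 (q - 1) = Finset.Ico 1 q := by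
      rw [← Finset.Ico_add_one_right_eq_Icc]
      congr 1
      have := hq.pos
      omega
    show ((∑ i ∈ Finset.Icc 1 (q - 1), i ^ n : ℕ) : R) = 0
    rw [Nat.cast_sum, hIcc, ← h0]
    exact Finset.sum_congr rfl fun i _ => hcast i
  have hTd : q ^ a ∣ S n (q - 1) := (ZMod.natCast_eq_zero_iff _ _).mp hT
  -- the block sums vanish
  have hD : ∀ m : ℕ, ((∑ i ∈ Finset.Icc (m + 1) (m + q), i ^ n : ℕ) : R) = 0 := by
    intro m
    rw [Nat.cast_sum]
    have h1 : ∑ i ∈ Finset.Icc (m + 1) (m + q), ((i ^ n : ℕ) : R)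
        = ∑ j ∈ Finset.range q, F (((m + 1 + j : ℕ)) : ZMod q) := by
      refine Finset.sum_nbij' (fun i => i - (m + 1)) (fun j => m + 1 + j) ?_ ?_ ?_ ?_ ?_
      · intro i hi; simp only [Finset.mem_Icc] at hi; simp only [Finset.mem_range]; omega
      · intro j hj; simp only [Finset.mem_range] at hj; simp only [Finset.mem_Icc]; omega
      · intro i hi; simp only [Finset.mem_Icc] at hi
        show m + 1 + (i - (m + 1)) = i; omega
      · intro j hj; simp only [Finset.mem_range] at hj
        show m + 1 + j - (m + 1) = j; omega
      · intro i hi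
        simp only [Finset.mem_Icc] at hi
        have he : m + 1 + (i - (m + 1)) = i := by omega
        rw [he, hcast i]
    rw [h1]
    have h2 : ∀ j : ℕ, F (((m + 1 + j : ℕ)) : ZMod q)
        = (fun x => F (((m + 1 : ℕ) : ZMod q) + x)) ((j : ℕ) : ZMod q) := by
      intro j; push_cast; ring_nf
    rw [Finset.sum_congr rfl fun j _ => h2 j,
      hrange (fun x => F (((m + 1 : ℕ) : ZMod q) + x))]
    have h3 := Equiv.sum_comp (Equiv.addLeft (((m + 1 : ℕ) : ZMod q))) F
    simp only [Equiv.coe_addLeft] at h3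
    rw [h3]
    exact hSsum
  constructor
  · intro m _
    have hsplit : S n (m + q) = S n m + ∑ i ∈ Finset.Icc (m + 1) (m + q), i ^ n := by
      show (∑ i ∈ Finset.Icc 1 (m + q), i ^ n)
          = (∑ i ∈ Finset.Icc 1 m, i ^ n) + ∑ i ∈ Finset.Icc (m + 1) (m + q), i ^ n
      rw [show Finset.Icc 1 (m + q) = Finset.Ioc 0 (m + q) from (Finset.Icc_add_one_left_eq_Ioc 0 _),
        show Finset.Icc 1 m = Finset.Ioc 0 m from (Finset.Icc_add_one_left_eq_Ioc 0 _),
        show Finset.Icc (m + 1) (m + q) = Finset.Ioc m (m + q) from (Finset.Icc_add_one_left_eq_Ioc m _)]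
      exact (Finset.sum_Ioc_consecutive _ (Nat.zero_le m) (Nat.le_add_right m q)).symm
    rw [← ZMod.natCast_eq_natCast_iff, hsplit, Nat.cast_add, hD m, add_zero]
  · intro hcon
    have h1 : S n q = S n (q - 1) + q ^ n := by
      show (∑ i ∈ Finset.Icc 1 q, i ^ n) = (∑ i ∈ Finset.Icc 1 (q - 1), i ^ n) + q ^ n
      have hq1 : q - 1 + 1 = q := Nat.succ_pred_eq_of_pos hq.pos
      conv_lhs => rw [← hq1]
      rw [Finset.sum_Icc_succ_top (by omega : 1 ≤ q - 1 + 1), hq1]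
    have hS1 : S n 1 = 1 := by
      show (∑ i ∈ Finset.Icc 1 1, i ^ n) = 1
      simp
    have han : a ≤ n := by
      have h2a : a - 1 < 2 ^ (a - 1) := Nat.lt_two_pow_self
      have h2b : 2 ^ (a - 1) ≤ q ^ (a - 1) := Nat.pow_le_pow_left hq.two_le _
      have h2c : q ^ (a - 1) ≤ n := Nat.le_of_dvd (by omega) ⟨k, hk⟩
      omega
    have hq0 : q ^ a ∣ S n q := by
      rw [h1]
      exact dvd_add hTd (pow_dvd_pow q han)
    have hz : (0 : ℕ) ≡ 1 [MOD q ^ a] :=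
      (Nat.modEq_zero_iff_dvd.mpr hq0).symm.trans (hS1 ▸ hcon)
    have hd1 : q ^ a ∣ 1 := Nat.modEq_zero_iff_dvd.mp hz.symm
    have := Nat.le_of_dvd one_pos hd1
    have h1q : 1 < q ^ a := Nat.one_lt_pow (by omega) hq.one_lt
    omega
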